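/- Let ∇ be a torsion-free connection on a Lie–Rinehart algebra L (i.e. ∇_X Y − ∇_Y X = [X,Y]). Then for all n ≥ 1 and X_0,…,X_n ∈ L: pbw(X_0 ⊙ ⋯ ⊙ X_n) ≡ X_0·X_1⋯X_n − Σ_{j<k} X_0⋯X̂_j⋯X̂_k⋯X_n · (∇_{X_j}X_k) modulo U^{≤ n−1}(L). -/

import Mathlib

/-! STATEMENT 6: for a torsion-free connection `∇`,
`pbw(X_0⊙⋯⊙X_n) ≡ X_0⋯X_n − Σ_{j<k} X_0⋯X̂_j⋯X̂_k⋯X_n·(∇_{X_j}X_k)`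
modulo `U^{≤n−1}(L)` (here `n ≥ 1`, i.e. at least two factors). -/

noncomputable section

def EMap {L U : Type*} [Ring U] [Algebra ℚ U] (j : L → U) (nab : L → L → L) :
    (n : ℕ) → (Fin n → L) → U
  | 0, _ => 1
  | (n + 1), X =>
      (((n : ℚ) + 1)⁻¹) •
        ((∑ k : Fin (n + 1), j (X k) * EMap j nab n (X ∘ k.succAbove)) -
          ∑ k : Fin (n + 1), ∑ m : Fin n,
            EMap j nab n
              (Function.update (X ∘ k.succAbove) m (nab (X k) (X (k.succAbove m)))))

def Ufil {A L U : Type*} [CommRing A] [Ring U] [Algebra ℚ U]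
    (ι : A →+* U) (j : L → U) (n : ℕ) : Submodule ℚ U :=
  Submodule.span ℚ
    {u | ∃ m ≤ n, ∃ (a : A) (X : Fin m → L),
      u = ι a * (List.ofFn fun i => j (X i)).prod}

set_option linter.unusedSectionVars false

namespace PbwAux

def wrd {L U : Type*} [Ring U] (j : L → U) (l : List L) : U := (l.map j).prod

variable {A L U : Type*} [CommRing A] [Algebra ℚ A]
    [LieRing L] [Module A L] [Ring U] [Algebra ℚ U]
    (ι : A →+* U) (j : L → U) (ρ : L → A → A)

@[simp] theorem wrd_nil : wrd j ([] : List L) = 1 := rfl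
@[simp] theorem wrd_cons (x : L) (l : List L) : wrd j (x :: l) = j x * wrd j l := by
  simp [wrd]
theorem wrd_append (l₁ l₂ : List L) : wrd j (l₁ ++ l₂) = wrd j l₁ * wrd j l₂ := by
  simp [wrd]
theorem wrd_ofFn {m : ℕ} (X : Fin m → L) :
    wrd j (List.ofFn X) = (List.ofFn fun i => j (X i)).prod := by
  rw [wrd, List.map_ofFn]; rfl

theorem succAbove_coe {n : ℕ} (p : Fin (n+1)) (i : Fin n) :
    (p.succAbove i : ℕ) = if (i:ℕ) < (p:ℕ) then (i:ℕ) else (i:ℕ)+1 := by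
  by_cases h : (i:ℕ) < (p:ℕ)
  · rw [Fin.succAbove, if_pos (by simpa [Fin.lt_def] using h)]; simp [h]
  · rw [Fin.succAbove, if_neg (by simpa [Fin.lt_def] using h)]; simp [h]

theorem erase_ofFn {α : Type*} {n : ℕ} (X : Fin (n+1) → α) (k : Fin (n+1)) :
    (List.ofFn X).eraseIdx (k : ℕ) = List.ofFn (X ∘ k.succAbove) := by
  apply List.ext_getElem
  · simp [List.length_eraseIdx, k.isLt]
  · intro i h1 h2
    rw [List.getElem_eraseIdx]
    simp only [List.getElem_ofFn, Function.comp_apply, List.length_ofFn] at *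
    split_ifs <;>
      (congr 1; apply Fin.ext; rw [succAbove_coe]; simp only [Fin.val_mk]; split_ifs <;> omega)

theorem eraseIdx_map' {α β : Type*} (f : α → β) : ∀ (l : List α) (i : ℕ),
    (l.map f).eraseIdx i = (l.eraseIdx i).map f := by
  intro l
  induction l with
  | nil => intro i; simp
  | cons x t ih =>
    intro i
    cases i with
    | zero => simp
    | succ i => simp [List.eraseIdx_cons_succ, ih]

theorem eraseIdx_comm' {α : Type*} : ∀ (l : List α) (a b : ℕ), a ≤ b →
    (l.eraseIdx a).eraseIdx b = (l.eraseIdx (b+1)).eraseIdx a := by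
  intro l
  induction l with
  | nil => intro a b _; simp
  | cons x t ih =>
    intro a b hab
    cases a with
    | zero => simp [List.eraseIdx_cons_succ]
    | succ a =>
      cases b with
      | zero => omega
      | succ b =>
        simp only [List.eraseIdx_cons_succ]
        rw [ih a b (by omega)]

theorem Fmono {m n : ℕ} (h : m ≤ n) : Ufil ι j m ≤ Ufil ι j n := by
  apply Submodule.span_mono
  rintro u ⟨m', hm', a, X, rfl⟩
  exact ⟨m', le_trans hm' h, a, X, rfl⟩

theorem iwrd_mem {n : ℕ} (a : A) (l : List L) (h : l.length ≤ n) :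
    ι a * wrd j l ∈ Ufil ι j n := by
  apply Submodule.subset_span
  refine ⟨l.length, h, a, l.get, ?_⟩
  congr 1
  rw [wrd, show (fun i => j (l.get i)) = j ∘ l.get from rfl, ← List.map_ofFn, List.ofFn_get]

theorem wrd_mem {n : ℕ} (l : List L) (h : l.length ≤ n) :
    wrd j l ∈ Ufil ι j n := by
  have := iwrd_mem ι j (1 : A) l h
  simpa using this

variable (hcomm : ∀ (X : L) (a : A), j X * ι a = ι a * j X + ι (ρ X a))

include hcomm in
theorem jmul_left {n : ℕ} (Y : L) {u : U} (hu : u ∈ Ufil ι j n) :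
    j Y * u ∈ Ufil ι j (n + 1) := by
  induction hu using Submodule.span_induction with
  | mem u hm =>
    obtain ⟨m, hm', a, X, rfl⟩ := hm
    rw [← mul_assoc, hcomm, add_mul, mul_assoc]
    apply Submodule.add_mem
    · have : j Y * (List.ofFn fun i => j (X i)).prod = wrd j (Y :: List.ofFn X) := by
        rw [wrd_cons, wrd_ofFn]
      rw [this]
      exact iwrd_mem ι j a _ (by simpa using Nat.succ_le_succ hm')
    · rw [← wrd_ofFn]
      exact iwrd_mem ι j _ _ (by simpa using le_trans hm' (Nat.le_succ n))
  | zero => simpa using Submodule.zero_mem _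
  | add x y hx hy ihx ihy => rw [mul_add]; exact Submodule.add_mem _ ihx ihy
  | smul q x hx ih => rw [mul_smul_comm]; exact Submodule.smul_mem _ _ ih

theorem jmul_right {n : ℕ} (Y : L) {u : U} (hu : u ∈ Ufil ι j n) :
    u * j Y ∈ Ufil ι j (n + 1) := by
  induction hu using Submodule.span_induction with
  | mem u hm =>
    obtain ⟨m, hm', a, X, rfl⟩ := hm
    rw [mul_assoc]
    have : (List.ofFn fun i => j (X i)).prod * j Y = wrd j (List.ofFn X ++ [Y]) := by
      rw [wrd_append, wrd_ofFn]; simp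
    rw [this]
    exact iwrd_mem ι j a _ (by simpa using Nat.succ_le_succ hm')
  | zero => simpa using Submodule.zero_mem _
  | add x y hx hy ihx ihy => rw [add_mul]; exact Submodule.add_mem _ ihx ihy
  | smul q x hx ih => rw [smul_mul_assoc]; exact Submodule.smul_mem _ _ ih

include hcomm in
theorem wmul_left {n : ℕ} (l : List L) {u : U} (hu : u ∈ Ufil ι j n) :
    wrd j l * u ∈ Ufil ι j (n + l.length) := by
  induction l with
  | nil => simpa using hu
  | cons x t ih =>
    rw [wrd_cons, mul_assoc]
    have h2 : n + (x :: t).length = (n + t.length) + 1 := by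
      simp only [List.length_cons]; omega
    rw [h2]
    exact jmul_left ι j ρ hcomm x ih


section Hom
variable (hj_add : ∀ X Y : L, j (X + Y) = j X + j Y)
include hj_add

theorem j_zero : j (0 : L) = 0 := by
  have h := hj_add 0 0
  rw [add_zero] at h
  exact (left_eq_add.mp h)

theorem j_sub (x y : L) : j (x - y) = j x - j y := by
  have h0 : j (0:L) = 0 := j_zero j hj_add
  have hneg : ∀ z : L, j (-z) = - j z := by
    intro z
    have h := hj_add z (-z)
    rw [add_neg_cancel, h0] at h
    exact eq_neg_of_add_eq_zero_right h.symm
  rw [sub_eq_add_neg, hj_add, hneg, ← sub_eq_add_neg]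

end Hom

section Perm
variable (hbr : ∀ X Y : L, j X * j Y - j Y * j X = j ⁅X, Y⁆)
variable (hcomm : ∀ (X : L) (a : A), j X * ι a = ι a * j X + ι (ρ X a))

include hbr in
theorem jswap (x y : L) : j x * j y = j y * j x + j ⁅x, y⁆ := by
  have h := hbr x y
  rw [sub_eq_iff_eq_add] at h
  rw [h, add_comm]

include hbr hcomm in
theorem perm_mem {l l' : List L} (h : l.Perm l') : ∀ N, l.length ≤ N + 1 →
    wrd j l - wrd j l' ∈ Ufil ι j N := by
  induction h with
  | nil => intro N _; simpa using Submodule.zero_mem _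
  | @cons x l₁ l₂ h ih =>
    intro N hlen
    match N with
    | 0 =>
      have h1 : l₁ = [] := by
        have : l₁.length = 0 := by simp only [List.length_cons] at hlen; omega
        exact List.length_eq_zero_iff.mp this
      subst h1
      have h2 : l₂ = [] := by
        have : l₂.length = 0 := by rw [← h.length_eq]; rfl
        exact List.length_eq_zero_iff.mp this
      subst h2
      simpa using Submodule.zero_mem _
    | (N+1) =>
      have e : wrd j (x :: l₁) - wrd j (x :: l₂) = j x * (wrd j l₁ - wrd j l₂) := by
        rw [wrd_cons, wrd_cons, mul_sub]
      rw [e]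
      exact jmul_left ι j ρ hcomm x (ih N (by simp only [List.length_cons] at hlen; omega))
  | swap x y l =>
    intro N hlen
    have e : wrd j (y :: x :: l) - wrd j (x :: y :: l) = wrd j (⁅y, x⁆ :: l) := by
      simp only [wrd_cons, ← mul_assoc]
      rw [← sub_mul, hbr y x]
    rw [e]
    exact wrd_mem ι j _ (by simp only [List.length_cons] at hlen ⊢; omega)
  | @trans l₁ l₂ l₃ h1 h2 ih1 ih2 =>
    intro N hlen
    have e : wrd j l₁ - wrd j l₃ = (wrd j l₁ - wrd j l₂) + (wrd j l₂ - wrd j l₃) := by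
      abel
    rw [e]
    exact Submodule.add_mem _ (ih1 N hlen) (ih2 N (by rw [← h1.length_eq]; exact hlen))

include hbr hcomm in
theorem comm_mem : ∀ (l : List L) (Y : L), j Y * wrd j l - wrd j l * j Y ∈ Ufil ι j l.length := by
  intro l
  induction l with
  | nil => intro Y; simpa using Submodule.zero_mem _
  | cons z t ih =>
    intro Y
    have key : j Y * wrd j (z :: t) - wrd j (z :: t) * j Y
        = j z * (j Y * wrd j t - wrd j t * j Y) + wrd j (⁅Y, z⁆ :: t) := by
      simp only [wrd_cons]
      rw [← mul_assoc, jswap j hbr Y z]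
      noncomm_ring
    rw [key]
    refine Submodule.add_mem _ ?_ ?_
    · exact jmul_left ι j ρ hcomm z (ih Y)
    · exact wrd_mem ι j _ (by simp)


include hbr hcomm in
theorem moveA1 : ∀ (m : ℕ) (X : Fin (m+1) → L) (k : Fin (m+1)),
    j (X k) * wrd j (List.ofFn (X ∘ k.succAbove)) -
      (wrd j (List.ofFn X) +
        ∑ i ∈ Finset.univ.filter (fun t : Fin (m+1) => t < k),
          wrd j (((List.ofFn X).eraseIdx (k:ℕ)).eraseIdx (i:ℕ)) * j ⁅X k, X i⁆)
    ∈ Ufil ι j (m - 1) := by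
  intro m
  induction m with
  | zero =>
    intro X k
    have hk : k = 0 := Fin.ext (by omega)
    subst hk
    have hfil : Finset.univ.filter (fun t : Fin 1 => t < 0) = ∅ := by
      apply Finset.filter_false_of_mem
      intro t _
      exact Fin.not_lt_zero t
    rw [hfil]
    simp [wrd]
  | succ m ih =>
    intro X k
    induction k using Fin.cases with
    | zero =>
      have e0 : j (X 0) * wrd j (List.ofFn (X ∘ (0 : Fin (m+2)).succAbove))
          = wrd j (List.ofFn X) := by
        rw [List.ofFn_succ (f := X), wrd_cons]
        congr 2
      have efil : Finset.univ.filter (fun t : Fin (m+2) => t < 0) = ∅ := by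
        apply Finset.filter_false_of_mem
        intro t _
        exact Fin.not_lt_zero t
      rw [e0, efil]
      simpa using Submodule.zero_mem _
    | succ k' =>
      cases m with
      | zero =>
        have hk' : k' = 0 := Fin.ext (by omega)
        subst hk'
        have hfil : Finset.univ.filter (fun t : Fin 2 => t < (0:Fin 1).succ) = {0} := by
          decide
        rw [hfil, Finset.sum_singleton]
        have l1 : List.ofFn (X ∘ ((0:Fin 1).succ).succAbove) = [X 0] := by
          rw [show (X ∘ ((0:Fin 1).succ).succAbove) = (fun _ : Fin 1 => X 0) from ?_]
          · simp
          · funext z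
            have hz : z = 0 := Fin.ext (by omega)
            subst hz
            rfl
        have l2 : List.ofFn X = [X 0, X 1] := by
          have : X = ![X 0, X 1] := by
            funext z
            fin_cases z <;> rfl
          rw [this]
          simp [List.ofFn_succ]
        have l3 : (((List.ofFn X).eraseIdx (((0:Fin 1).succ : Fin 2) : ℕ)).eraseIdx ((0 : Fin 2):ℕ)) = [] := by
          rw [l2]
          rfl
        rw [l1, l3, l2]
        have e : j (X ((0:Fin 1).succ)) * wrd j [X 0] -
            (wrd j [X 0, X 1] + wrd j [] * j ⁅X ((0:Fin 1).succ), X (0:Fin 2)⁆) = 0 := by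
          have h10 : X ((0:Fin 1).succ) = X 1 := rfl
          have h00 : X (0 : Fin 2) = X 0 := rfl
          rw [h10, h00]
          simp only [wrd_cons, wrd_nil, mul_one, one_mul]
          rw [jswap j hbr (X 1) (X 0)]
          noncomm_ring
        rw [e]
        exact Submodule.zero_mem _
      | succ m' =>
        set T : Fin (m'+2) → L := Fin.tail X with hT
        have eT : List.ofFn (fun i : Fin (m'+2) => X i.succ) = List.ofFn T := rfl
        have e1 : List.ofFn (X ∘ (k'.succ).succAbove) = X 0 :: List.ofFn (T ∘ k'.succAbove) := by
          rw [List.ofFn_succ]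
          congr 1
          · congr 1
            funext i
            simp [Function.comp, Fin.succ_succAbove_succ, hT, Fin.tail]
        have eA : (List.ofFn X).eraseIdx ((k'.succ : Fin (m'+3)) : ℕ)
            = X 0 :: (List.ofFn T).eraseIdx ((k' : Fin (m'+2)) : ℕ) := by
          rw [List.ofFn_succ (f := X), show ((k'.succ : Fin (m'+3)) : ℕ) = ((k' : Fin (m'+2)) : ℕ) + 1 from rfl,
            List.eraseIdx_cons_succ, eT]
        have eW : ((List.ofFn X).eraseIdx ((k'.succ : Fin (m'+3)) : ℕ)).eraseIdx ((0 : Fin (m'+3)) : ℕ)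
            = List.ofFn (T ∘ k'.succAbove) := by
          rw [eA]
          show (List.ofFn T).eraseIdx ((k' : Fin (m'+2)) : ℕ) = _
          rw [erase_ofFn]
        have hsum : (∑ i ∈ Finset.univ.filter (fun t : Fin (m'+3) => t < k'.succ),
              wrd j (((List.ofFn X).eraseIdx ((k'.succ : Fin (m'+3)) : ℕ)).eraseIdx (i:ℕ)) * j ⁅X k'.succ, X i⁆)
            = wrd j (List.ofFn (T ∘ k'.succAbove)) * j ⁅X k'.succ, X 0⁆
              + j (X 0) * ∑ i ∈ Finset.univ.filter (fun t : Fin (m'+2) => t < k'),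
                  wrd j (((List.ofFn T).eraseIdx ((k' : Fin (m'+2)) : ℕ)).eraseIdx (i:ℕ)) * j ⁅T k', T i⁆ := by
          rw [Finset.sum_filter, Fin.sum_univ_succ]
          rw [if_pos (Fin.succ_pos k')]
          rw [eW]
          congr 1
          rw [Finset.mul_sum, Finset.sum_filter]
          apply Finset.sum_congr rfl
          intro i _
          by_cases hik : i < k'
          · rw [if_pos (Fin.succ_lt_succ_iff.mpr hik), if_pos hik]
            have eD : (((List.ofFn X).eraseIdx ((k'.succ : Fin (m'+3)) : ℕ)).eraseIdx ((i.succ : Fin (m'+3)) : ℕ))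
                = X 0 :: (((List.ofFn T).eraseIdx ((k' : Fin (m'+2)) : ℕ)).eraseIdx ((i : Fin (m'+2)) : ℕ)) := by
              rw [eA, show ((i.succ : Fin (m'+3)) : ℕ) = ((i : Fin (m'+2)) : ℕ) + 1 from rfl,
                List.eraseIdx_cons_succ]
            rw [eD, wrd_cons, mul_assoc]
            rfl
          · rw [if_neg (fun h => hik (Fin.succ_lt_succ_iff.mp h)), if_neg hik]
        rw [e1, hsum]
        have hIH := ih T k'
        have h2 := comm_mem ι j ρ hcomm hbr (List.ofFn (T ∘ k'.succAbove)) ⁅X k'.succ, X 0⁆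
        have hlen : (List.ofFn (T ∘ k'.succAbove)).length = m' + 1 := by simp
        rw [hlen] at h2
        have hTk : T k' = X k'.succ := rfl
        have e : j (X k'.succ) * wrd j (X 0 :: List.ofFn (T ∘ k'.succAbove)) -
            (wrd j (List.ofFn X) +
              (wrd j (List.ofFn (T ∘ k'.succAbove)) * j ⁅X k'.succ, X 0⁆
                + j (X 0) * ∑ i ∈ Finset.univ.filter (fun t : Fin (m'+2) => t < k'),
                  wrd j (((List.ofFn T).eraseIdx ((k' : Fin (m'+2)) : ℕ)).eraseIdx (i:ℕ)) * j ⁅T k', T i⁆))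
            = j (X 0) * (j (T k') * wrd j (List.ofFn (T ∘ k'.succAbove)) -
                (wrd j (List.ofFn T) +
                  ∑ i ∈ Finset.univ.filter (fun t : Fin (m'+2) => t < k'),
                    wrd j (((List.ofFn T).eraseIdx ((k' : Fin (m'+2)) : ℕ)).eraseIdx (i:ℕ)) * j ⁅T k', T i⁆))
              + (j ⁅X k'.succ, X 0⁆ * wrd j (List.ofFn (T ∘ k'.succAbove))
                  - wrd j (List.ofFn (T ∘ k'.succAbove)) * j ⁅X k'.succ, X 0⁆) := by
          rw [wrd_cons, ← mul_assoc, jswap j hbr (X k'.succ) (X 0), hTk]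
          rw [List.ofFn_succ (f := X), wrd_cons, eT]
          noncomm_ring
        rw [e]
        have h1 : j (X 0) * (j (T k') * wrd j (List.ofFn (T ∘ k'.succAbove)) -
            (wrd j (List.ofFn T) +
              ∑ i ∈ Finset.univ.filter (fun t : Fin (m'+2) => t < k'),
                wrd j (((List.ofFn T).eraseIdx ((k' : Fin (m'+2)) : ℕ)).eraseIdx (i:ℕ)) * j ⁅T k', T i⁆))
            ∈ Ufil ι j (m' + 1) := jmul_left ι j ρ hcomm (X 0) hIH
        exact Submodule.add_mem _ h1 h2


end Perm

theorem range2 {m : ℕ} (b : Fin (m+2)) (a : Fin (m+1)) (y : Fin (m+2)) :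
    (∃ z, b.succAbove (a.succAbove z) = y) ↔ (y ≠ b ∧ y ≠ b.succAbove a) := by
  constructor
  · rintro ⟨z, rfl⟩
    refine ⟨Fin.succAbove_ne b _, fun h => Fin.succAbove_ne a z ?_⟩
    exact Fin.succAbove_right_injective h
  · rintro ⟨h1, h2⟩
    obtain ⟨w, hw⟩ := Fin.exists_succAbove_eq h1
    have hwa : w ≠ a := by
      rintro rfl
      exact h2 hw.symm
    obtain ⟨z, hz⟩ := Fin.exists_succAbove_eq hwa
    exact ⟨z, by rw [hz, hw]⟩

theorem range3 {m : ℕ} (c : Fin (m+3)) (b : Fin (m+2)) (a : Fin (m+1)) (y : Fin (m+3)) :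
    (∃ z, c.succAbove (b.succAbove (a.succAbove z)) = y) ↔
      (y ≠ c ∧ y ≠ c.succAbove b ∧ y ≠ c.succAbove (b.succAbove a)) := by
  constructor
  · rintro ⟨z, rfl⟩
    refine ⟨Fin.succAbove_ne c _, fun h => ?_, fun h => ?_⟩
    · exact Fin.succAbove_ne b _ (Fin.succAbove_right_injective h)
    · exact Fin.succAbove_ne a z (Fin.succAbove_right_injective (Fin.succAbove_right_injective h))
  · rintro ⟨h1, h2, h3⟩
    obtain ⟨w, hw⟩ := Fin.exists_succAbove_eq h1
    have hwb : w ≠ b := by rintro rfl; exact h2 hw.symm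
    have hwba : w ≠ b.succAbove a := by rintro rfl; exact h3 hw.symm
    obtain ⟨z, hz⟩ := (range2 b a w).mpr ⟨hwb, hwba⟩
    exact ⟨z, by rw [hz, hw]⟩

theorem pce_idx {m : ℕ} (k : Fin (m+1)) :
    (List.finRange (m+1)).Perm (k :: List.ofFn k.succAbove) := by
  apply List.perm_of_nodup_nodup_toFinset_eq (List.nodup_finRange _)
  · exact List.nodup_cons.mpr ⟨fun h => by
      obtain ⟨z, hz⟩ := List.mem_ofFn.mp h
      exact Fin.succAbove_ne k z hz,
      List.nodup_ofFn.mpr Fin.succAbove_right_injective⟩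
  · apply Finset.ext
    intro y
    simp only [List.mem_toFinset, List.mem_finRange, List.mem_cons, List.mem_ofFn, Set.mem_range,
      true_iff]
    by_cases hy : y = k
    · exact Or.inl hy
    · exact Or.inr (Fin.exists_succAbove_eq hy)

theorem pce {α : Type*} {m : ℕ} (Y : Fin (m+1) → α) (k : Fin (m+1)) :
    (List.ofFn Y).Perm (Y k :: List.ofFn (Y ∘ k.succAbove)) := by
  have h := (pce_idx k).map Y
  rw [List.map_cons, List.map_ofFn] at h
  rw [List.ofFn_eq_map]
  exact h

section Main
variable (hbr : ∀ X Y : L, j X * j Y - j Y * j X = j ⁅X, Y⁆)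
variable (hcomm : ∀ (X : L) (a : A), j X * ι a = ι a * j X + ι (ρ X a))
include hbr hcomm

-- P4: the updated tuple word
theorem updWord_mem {M : ℕ} (X : Fin (M+3) → L) (k : Fin (M+3)) (m : Fin (M+2)) (V : L) :
    wrd j (List.ofFn (Function.update (X ∘ k.succAbove) m V)) -
      wrd j (((List.ofFn X).eraseIdx (max (k:ℕ) ((k.succAbove m : Fin (M+3)):ℕ))).eraseIdx
          (min (k:ℕ) ((k.succAbove m : Fin (M+3)):ℕ))) * j V
      ∈ Ufil ι j (M+1) := by
  set Y := Function.update (X ∘ k.succAbove) m V with hY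
  have hYm : Y m = V := by rw [hY]; simp
  have hYc : Y ∘ m.succAbove = (X ∘ k.succAbove) ∘ m.succAbove := by
    funext z
    rw [hY]
    exact Function.update_of_ne (Fin.succAbove_ne m z) _ _
  have hlist : ((List.ofFn X).eraseIdx (max (k:ℕ) ((k.succAbove m : Fin (M+3)):ℕ))).eraseIdx
      (min (k:ℕ) ((k.succAbove m : Fin (M+3)):ℕ)) = List.ofFn ((X ∘ k.succAbove) ∘ m.succAbove) := by
    rw [← erase_ofFn (X ∘ k.succAbove) m, ← erase_ofFn X k]
    have hc := succAbove_coe k m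
    by_cases h : (m:ℕ) < (k:ℕ)
    · rw [if_pos h] at hc
      have h1 : max (k:ℕ) ((k.succAbove m : Fin (M+3)):ℕ) = (k:ℕ) := by omega
      have h2 : min (k:ℕ) ((k.succAbove m : Fin (M+3)):ℕ) = (m:ℕ) := by omega
      rw [h1, h2]
    · rw [if_neg h] at hc
      have h1 : max (k:ℕ) ((k.succAbove m : Fin (M+3)):ℕ) = (m:ℕ)+1 := by omega
      have h2 : min (k:ℕ) ((k.succAbove m : Fin (M+3)):ℕ) = (k:ℕ) := by omega
      rw [h1, h2]
      rw [eraseIdx_comm' _ (k:ℕ) (m:ℕ) (by omega)]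
  rw [hlist]
  have hperm : (List.ofFn Y).Perm (V :: List.ofFn ((X ∘ k.succAbove) ∘ m.succAbove)) := by
    have := pce Y m
    rw [hYm, hYc] at this
    exact this
  have h1 := perm_mem ι j ρ hcomm hbr hperm (M+1) (by simp)
  have h2 := comm_mem ι j ρ hcomm hbr (List.ofFn ((X ∘ k.succAbove) ∘ m.succAbove)) V
  have hlen : (List.ofFn ((X ∘ k.succAbove) ∘ m.succAbove)).length = M+1 := by simp
  rw [hlen] at h2
  have e : wrd j (List.ofFn Y) - wrd j (List.ofFn ((X ∘ k.succAbove) ∘ m.succAbove)) * j V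
      = (wrd j (List.ofFn Y) - wrd j (V :: List.ofFn ((X ∘ k.succAbove) ∘ m.succAbove)))
        + (j V * wrd j (List.ofFn ((X ∘ k.succAbove) ∘ m.succAbove))
            - wrd j (List.ofFn ((X ∘ k.succAbove) ∘ m.succAbove)) * j V) := by
    rw [wrd_cons]
    abel
  rw [e]
  exact Submodule.add_mem _ h1 h2

-- P2: moving X k into a doubly-erased word
theorem consWord_mem {M : ℕ} (X : Fin (M+3) → L) (k : Fin (M+3)) (kk : Fin (M+2)) (jj : Fin (M+2))
    (hjk : jj < kk) (V : L) :
    j (X k) * (wrd j (((List.ofFn (X ∘ k.succAbove)).eraseIdx (kk:ℕ)).eraseIdx (jj:ℕ)) * j V) -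
      wrd j (((List.ofFn X).eraseIdx ((k.succAbove kk : Fin (M+3)):ℕ)).eraseIdx
        ((k.succAbove jj : Fin (M+3)):ℕ)) * j V
      ∈ Ufil ι j (M+1) := by
  have hkk : (kk:ℕ) < M + 2 := kk.isLt
  have hjj : (jj:ℕ) < M + 1 := by
    have := Fin.lt_def.mp hjk
    omega
  set jj' : Fin (M+1) := ⟨(jj:ℕ), hjj⟩ with hjj'
  set q : Fin (M+3) := k.succAbove kk with hq
  set p : Fin (M+3) := k.succAbove jj with hp
  have hpq : p < q := by
    rw [hp, hq]
    exact Fin.succAbove_lt_succAbove_iff.mpr hjk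
  have hp2 : (p:ℕ) < M + 2 := by
    have := Fin.lt_def.mp hpq
    have := q.isLt
    omega
  set p' : Fin (M+2) := ⟨(p:ℕ), hp2⟩ with hp'
  have hσjj : kk.succAbove jj' = jj := by
    apply Fin.ext
    rw [succAbove_coe]
    simp only [hjj', Fin.val_mk]
    rw [if_pos (Fin.lt_def.mp hjk)]
  have hσp : q.succAbove p' = p := by
    apply Fin.ext
    rw [succAbove_coe]
    simp only [hp', Fin.val_mk]
    rw [if_pos (Fin.lt_def.mp hpq)]
  -- identify the lists as ofFn of compositions
  have e1 : ((List.ofFn (X ∘ k.succAbove)).eraseIdx (kk:ℕ)).eraseIdx (jj:ℕ)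
      = List.ofFn (((X ∘ k.succAbove) ∘ kk.succAbove) ∘ jj'.succAbove) := by
    rw [erase_ofFn (X ∘ k.succAbove) kk, show (jj:ℕ) = (jj':ℕ) from rfl,
      erase_ofFn ((X ∘ k.succAbove) ∘ kk.succAbove) jj']
  have e2 : ((List.ofFn X).eraseIdx (q:ℕ)).eraseIdx ((p:ℕ))
      = List.ofFn ((X ∘ q.succAbove) ∘ p'.succAbove) := by
    rw [erase_ofFn X q, show (p:ℕ) = (p':ℕ) from rfl, erase_ofFn (X ∘ q.succAbove) p']
  -- index-level permutation
  have hidx : (k :: List.ofFn (fun z => k.succAbove (kk.succAbove (jj'.succAbove z)))).Perm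
      (List.ofFn (fun z => q.succAbove (p'.succAbove z))) := by
    apply List.perm_of_nodup_nodup_toFinset_eq
    · refine List.nodup_cons.mpr ⟨fun h => ?_, List.nodup_ofFn.mpr ?_⟩
      · obtain ⟨z, hz⟩ := List.mem_ofFn.mp h
        exact Fin.succAbove_ne k _ hz
      · intro a b hab
        exact Fin.succAbove_right_injective (Fin.succAbove_right_injective
          (Fin.succAbove_right_injective hab))
    · exact List.nodup_ofFn.mpr fun a b hab =>
        Fin.succAbove_right_injective (Fin.succAbove_right_injective hab)
    · apply Finset.ext
      intro y
      simp only [List.mem_toFinset, List.mem_cons, List.mem_ofFn, Set.mem_range]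
      rw [show (∃ z, k.succAbove (kk.succAbove (jj'.succAbove z)) = y) ↔ _ from range3 k kk jj' y,
        show (∃ z, q.succAbove (p'.succAbove z) = y) ↔ _ from range2 q p' y]
      rw [hσjj, hσp]
      have hkq : q ≠ k := Fin.succAbove_ne k kk
      have hkp : p ≠ k := Fin.succAbove_ne k jj
      constructor
      · rintro (rfl | ⟨h1, h2, h3⟩)
        · exact ⟨fun h => hkq h.symm, fun h => hkp h.symm⟩
        · exact ⟨h2, h3⟩
      · rintro ⟨h1, h2⟩
        by_cases hy : y = k
        · exact Or.inl hy
        · exact Or.inr ⟨hy, h1, h2⟩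
  -- transport along X
  have hmap := hidx.map X
  rw [List.map_cons, List.map_ofFn, List.map_ofFn] at hmap
  have hperm : (X k :: List.ofFn (((X ∘ k.succAbove) ∘ kk.succAbove) ∘ jj'.succAbove)).Perm
      (List.ofFn ((X ∘ q.succAbove) ∘ p'.succAbove)) := hmap
  have h1 := perm_mem ι j ρ hcomm hbr hperm M (by simp)
  have h2 := jmul_right ι j V h1
  have e3 : (wrd j (X k :: List.ofFn (((X ∘ k.succAbove) ∘ kk.succAbove) ∘ jj'.succAbove))
      - wrd j (List.ofFn ((X ∘ q.succAbove) ∘ p'.succAbove))) * j V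
      = j (X k) * (wrd j (List.ofFn (((X ∘ k.succAbove) ∘ kk.succAbove) ∘ jj'.succAbove)) * j V)
        - wrd j (List.ofFn ((X ∘ q.succAbove) ∘ p'.succAbove)) * j V := by
    rw [wrd_cons]
    noncomm_ring
  rw [e3] at h2
  rw [e1, e2]
  have hmod : M + 1 + 1 - 1 = M + 1 := rfl
  exact h2

end Main

section Reindex
variable {V : Type*} [AddCommMonoid V]

theorem reindex1_k {M : ℕ} (H : Fin (M+3) → Fin (M+3) → V) (k : Fin (M+3)) :
    (∑ kk : Fin (M+2), ∑ jj ∈ Finset.univ.filter (fun t : Fin (M+2) => t < kk),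
        H (k.succAbove jj) (k.succAbove kk))
    = ∑ q : Fin (M+3), ∑ p : Fin (M+3),
        if p < q ∧ p ≠ k ∧ q ≠ k then H p q else 0 := by
  rw [Fin.sum_univ_succAbove
    (fun q => ∑ p : Fin (M+3), if p < q ∧ p ≠ k ∧ q ≠ k then H p q else 0) k]
  have e0 : (∑ p : Fin (M+3), if p < k ∧ p ≠ k ∧ k ≠ k then H p k else 0) = 0 := by
    apply Finset.sum_eq_zero
    intro p _
    simp
  rw [e0, zero_add]
  apply Finset.sum_congr rfl
  intro kk _
  rw [Fin.sum_univ_succAbove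
    (fun p => if p < k.succAbove kk ∧ p ≠ k ∧ k.succAbove kk ≠ k then H p (k.succAbove kk) else 0) k]
  have e1 : (if k < k.succAbove kk ∧ k ≠ k ∧ k.succAbove kk ≠ k then H k (k.succAbove kk) else 0)
      = 0 := by simp
  rw [e1, zero_add, Finset.sum_filter]
  apply Finset.sum_congr rfl
  intro jj _
  by_cases hj : jj < kk
  · rw [if_pos hj, if_pos ⟨Fin.succAbove_lt_succAbove_iff.mpr hj, Fin.succAbove_ne k jj,
      Fin.succAbove_ne k kk⟩]
  · rw [if_neg hj, if_neg (fun hcon => hj (Fin.succAbove_lt_succAbove_iff.mp hcon.1))]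

theorem card_ne_pair {M : ℕ} {p q : Fin (M+3)} (hpq : p ≠ q) :
    (Finset.univ.filter (fun k : Fin (M+3) => p ≠ k ∧ q ≠ k)).card = M + 1 := by
  have he : Finset.univ.filter (fun k : Fin (M+3) => p ≠ k ∧ q ≠ k)
      = ({p, q} : Finset (Fin (M+3)))ᶜ := by
    ext k
    simp only [Finset.mem_filter, Finset.mem_univ, true_and, Finset.mem_compl,
      Finset.mem_insert, Finset.mem_singleton, not_or]
    tauto
  rw [he, Finset.card_compl]
  rw [Finset.card_insert_of_notMem (by simpa using hpq), Finset.card_singleton]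
  simp

theorem reindex1 {M : ℕ} (H : Fin (M+3) → Fin (M+3) → V) :
    (∑ k : Fin (M+3), ∑ kk : Fin (M+2), ∑ jj ∈ Finset.univ.filter (fun t : Fin (M+2) => t < kk),
        H (k.succAbove jj) (k.succAbove kk))
    = (M+1) • ∑ q : Fin (M+3), ∑ p ∈ Finset.univ.filter (fun t : Fin (M+3) => t < q), H p q := by
  have h1 : (∑ k : Fin (M+3), ∑ kk : Fin (M+2),
      ∑ jj ∈ Finset.univ.filter (fun t : Fin (M+2) => t < kk),
        H (k.succAbove jj) (k.succAbove kk))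
      = ∑ k : Fin (M+3), ∑ q : Fin (M+3), ∑ p : Fin (M+3),
          if p < q ∧ p ≠ k ∧ q ≠ k then H p q else 0 :=
    Finset.sum_congr rfl (fun k _ => reindex1_k H k)
  rw [h1, Finset.sum_comm]
  have h2 : ∀ q : Fin (M+3), (∑ k : Fin (M+3), ∑ p : Fin (M+3),
      if p < q ∧ p ≠ k ∧ q ≠ k then H p q else 0)
      = ∑ p : Fin (M+3), if p < q then (M+1) • H p q else 0 := by
    intro q
    rw [Finset.sum_comm]
    apply Finset.sum_congr rfl
    intro p _
    by_cases hpq : p < q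
    · rw [if_pos hpq]
      have : (∑ k : Fin (M+3), if p < q ∧ p ≠ k ∧ q ≠ k then H p q else 0)
          = ∑ k ∈ Finset.univ.filter (fun k : Fin (M+3) => p ≠ k ∧ q ≠ k), H p q := by
        rw [Finset.sum_filter]
        apply Finset.sum_congr rfl
        intro k _
        by_cases hk : p ≠ k ∧ q ≠ k
        · rw [if_pos ⟨hpq, hk⟩, if_pos hk]
        · rw [if_neg (fun hcon => hk hcon.2), if_neg hk]
      rw [this, Finset.sum_const, card_ne_pair (ne_of_lt hpq)]
    · rw [if_neg hpq]
      apply Finset.sum_eq_zero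
      intro k _
      rw [if_neg (fun hcon => hpq hcon.1)]
  rw [Finset.sum_congr rfl (fun q _ => h2 q)]
  rw [Finset.smul_sum]
  apply Finset.sum_congr rfl
  intro q _
  rw [Finset.sum_filter, Finset.smul_sum]
  apply Finset.sum_congr rfl
  intro p _
  by_cases hpq : p < q
  · rw [if_pos hpq, if_pos hpq]
  · rw [if_neg hpq, if_neg hpq, smul_zero]

theorem sum_succAbove_ite {M : ℕ} (f : Fin (M+3) → V) (k : Fin (M+3)) :
    (∑ m : Fin (M+2), f (k.succAbove m)) = ∑ i : Fin (M+3), if i ≠ k then f i else 0 := by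
  rw [Fin.sum_univ_succAbove (fun i => if i ≠ k then f i else 0) k]
  simp only [ne_eq, not_true_eq_false, if_false, zero_add]
  apply Finset.sum_congr rfl
  intro m _
  rw [if_pos (Fin.succAbove_ne k m)]

theorem split_ne {M : ℕ} (G : Fin (M+3) → Fin (M+3) → V) :
    (∑ k : Fin (M+3), ∑ i : Fin (M+3), if i ≠ k then G k i else 0)
    = (∑ k : Fin (M+3), ∑ i ∈ Finset.univ.filter (fun t : Fin (M+3) => t < k), G k i)
      + ∑ q : Fin (M+3), ∑ p ∈ Finset.univ.filter (fun t : Fin (M+3) => t < q), G p q := by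
  have h1 : ∀ k, (∑ i : Fin (M+3), if i ≠ k then G k i else 0)
      = (∑ i : Fin (M+3), if i < k then G k i else 0)
        + ∑ i : Fin (M+3), if k < i then G k i else 0 := by
    intro k
    rw [← Finset.sum_add_distrib]
    apply Finset.sum_congr rfl
    intro i _
    rcases lt_trichotomy i k with h | h | h
    · rw [if_pos (ne_of_lt h), if_pos h, if_neg (lt_asymm h), add_zero]
    · subst h
      simp
    · rw [if_pos (ne_of_gt h), if_neg (lt_asymm h), if_pos h, zero_add]
  rw [Finset.sum_congr rfl (fun k _ => h1 k), Finset.sum_add_distrib]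
  congr 1
  · apply Finset.sum_congr rfl
    intro k _
    rw [Finset.sum_filter]
  · rw [Finset.sum_comm]
    apply Finset.sum_congr rfl
    intro q _
    rw [Finset.sum_filter]

end Reindex

def Hf {L U : Type*} [LieRing L] [Ring U] (j : L → U) (nab : L → L → L) {M : ℕ}
    (X : Fin (M+3) → L) (p q : Fin (M+3)) : U :=
  wrd j (((List.ofFn X).eraseIdx (q:ℕ)).eraseIdx (p:ℕ)) * j (nab (X p) (X q))

def GmD {L U : Type*} [LieRing L] [Ring U] (j : L → U) (nab : L → L → L) {M : ℕ}
    (X : Fin (M+3) → L) (a b : Fin (M+3)) : U :=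
  wrd j (((List.ofFn X).eraseIdx (max (a:ℕ) (b:ℕ))).eraseIdx (min (a:ℕ) (b:ℕ))) * j (nab (X a) (X b))

theorem GmD_lt {L U : Type*} [LieRing L] [Ring U] (j : L → U) (nab : L → L → L) {M : ℕ}
    (X : Fin (M+3) → L) {a b : Fin (M+3)} (h : b < a) :
    GmD j nab X a b
      = wrd j (((List.ofFn X).eraseIdx (a:ℕ)).eraseIdx (b:ℕ)) * j (nab (X a) (X b)) := by
  unfold GmD
  rw [Nat.max_eq_left (le_of_lt (Fin.lt_def.mp h)), Nat.min_eq_right (le_of_lt (Fin.lt_def.mp h))]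

theorem GmD_gt {L U : Type*} [LieRing L] [Ring U] (j : L → U) (nab : L → L → L) {M : ℕ}
    (X : Fin (M+3) → L) {a b : Fin (M+3)} (h : a < b) :
    GmD j nab X a b = Hf j nab X a b := by
  unfold GmD Hf
  rw [Nat.max_eq_right (le_of_lt (Fin.lt_def.mp h)), Nat.min_eq_left (le_of_lt (Fin.lt_def.mp h))]

section MainProof
variable (nab : L → L → L)
variable (hj_add : ∀ X Y : L, j (X + Y) = j X + j Y)
variable (hcomm : ∀ (X : L) (a : A), j X * ι a = ι a * j X + ι (ρ X a))
variable (hbr : ∀ X Y : L, j X * j Y - j Y * j X = j ⁅X, Y⁆)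
variable (htf : ∀ X Y : L, nab X Y - nab Y X = ⁅X, Y⁆)

set_option maxHeartbeats 2000000 in
include hj_add hcomm hbr htf in
theorem mainAux : ∀ (n : ℕ) (X : Fin (n + 2) → L),
    EMap j nab (n + 2) X -
        (wrd j (List.ofFn X) -
          ∑ k : Fin (n + 2), ∑ jj ∈ Finset.univ.filter (fun t : Fin (n + 2) => t < k),
            wrd j (((List.ofFn X).eraseIdx (k : ℕ)).eraseIdx (jj : ℕ)) * j (nab (X jj) (X k)))
      ∈ Ufil ι j n := by
  intro n
  induction n with
  | zero =>
    intro X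
    have hfil0 : Finset.univ.filter (fun t : Fin 2 => t < 0) = ∅ := by decide
    have hfil1 : Finset.univ.filter (fun t : Fin 2 => t < 1) = {0} := by decide
    have hE1 : ∀ Y : Fin 1 → L, EMap j nab 1 Y = j (Y 0) := by
      intro Y
      show (((0:ℕ) : ℚ) + 1)⁻¹ • ((∑ k : Fin 1, j (Y k) * EMap j nab 0 (Y ∘ k.succAbove)) -
        ∑ k : Fin 1, ∑ m : Fin 0, EMap j nab 0
          (Function.update (Y ∘ k.succAbove) m (nab (Y k) (Y (k.succAbove m))))) = j (Y 0)
      show (((0:ℕ) : ℚ) + 1)⁻¹ • ((∑ k : Fin 1, j (Y k) * (1:U)) -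
        ∑ k : Fin 1, ∑ m : Fin 0, (1:U)) = j (Y 0)
      simp
    have hE2 : EMap j nab 2 X = (((1:ℕ) : ℚ) + 1)⁻¹ •
        ((j (X 0) * j (X 1) + j (X 1) * j (X 0))
          - (j (nab (X 0) (X 1)) + j (nab (X 1) (X 0)))) := by
      show (((1:ℕ) : ℚ) + 1)⁻¹ • ((∑ k : Fin 2, j (X k) * EMap j nab 1 (X ∘ k.succAbove)) -
        ∑ k : Fin 2, ∑ m : Fin 1, EMap j nab 1
          (Function.update (X ∘ k.succAbove) m (nab (X k) (X (k.succAbove m))))) = _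
      congr 1
      rw [Fin.sum_univ_two, Fin.sum_univ_two, Fin.sum_univ_one, Fin.sum_univ_one]
      rw [hE1, hE1, hE1, hE1]
      have u0 : Function.update (X ∘ (0:Fin 2).succAbove) (0:Fin 1)
          (nab (X 0) (X ((0:Fin 2).succAbove 0))) 0 = nab (X 0) (X 1) := by
        rw [Function.update_self]
        rfl
      have u1 : Function.update (X ∘ (1:Fin 2).succAbove) (0:Fin 1)
          (nab (X 1) (X ((1:Fin 2).succAbove 0))) 0 = nab (X 1) (X 0) := by
        rw [Function.update_self]
        rfl
      rw [u0, u1]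
      rfl
    -- compute the target sum
    have hsum : (∑ k : Fin 2, ∑ jj ∈ Finset.univ.filter (fun t : Fin 2 => t < k),
        wrd j (((List.ofFn X).eraseIdx (k : ℕ)).eraseIdx (jj : ℕ)) * j (nab (X jj) (X k)))
        = j (nab (X 0) (X 1)) := by
      rw [Fin.sum_univ_two, hfil0, hfil1, Finset.sum_empty, Finset.sum_singleton, zero_add]
      have : (((List.ofFn X).eraseIdx ((1 : Fin 2) : ℕ)).eraseIdx ((0 : Fin 2) : ℕ)) = [] := by
        rw [List.ofFn_succ, List.ofFn_succ, List.ofFn_zero]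
        rfl
      rw [this, wrd_nil, one_mul]
    have hW : wrd j (List.ofFn X) = j (X 0) * j (X 1) := by
      rw [List.ofFn_succ, List.ofFn_succ, List.ofFn_zero, wrd_cons, wrd_cons, wrd_nil, mul_one]
      rfl
    rw [hE2, hsum, hW]
    -- now pure algebra
    have h10 : j (nab (X 1) (X 0)) = j (nab (X 0) (X 1))
        - (j (X 0) * j (X 1) - j (X 1) * j (X 0)) := by
      rw [hbr]
      rw [← j_sub j hj_add]
      congr 1
      have := htf (X 0) (X 1)
      rw [← this]
      abel
    have key : (((1:ℕ) : ℚ) + 1)⁻¹ •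
        ((j (X 0) * j (X 1) + j (X 1) * j (X 0))
          - (j (nab (X 0) (X 1)) + j (nab (X 1) (X 0))))
        - (j (X 0) * j (X 1) - j (nab (X 0) (X 1))) = 0 := by
      rw [h10]
      have e2 : (j (X 0) * j (X 1) + j (X 1) * j (X 0))
          - (j (nab (X 0) (X 1)) + (j (nab (X 0) (X 1))
              - (j (X 0) * j (X 1) - j (X 1) * j (X 0))))
          = (((1:ℕ) : ℚ) + 1) • (j (X 0) * j (X 1) - j (nab (X 0) (X 1))) := by
        have : (((1:ℕ) : ℚ) + 1) = (2 : ℚ) := by norm_num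
        rw [this, two_smul]
        abel
      rw [e2, smul_smul, inv_mul_cancel₀ (by norm_num), one_smul, sub_self]
    rw [key]
    exact Submodule.zero_mem _
  | succ n ih =>
    intro X
    show EMap j nab (n+3) X -
        (wrd j (List.ofFn X) -
          ∑ k : Fin (n+3), ∑ jj ∈ Finset.univ.filter (fun t : Fin (n+3) => t < k),
            wrd j (((List.ofFn X).eraseIdx (k : ℕ)).eraseIdx (jj : ℕ)) * j (nab (X jj) (X k)))
      ∈ Ufil ι j (n+1)
    have hE : EMap j nab (n+3) X = (((n+2:ℕ) : ℚ) + 1)⁻¹ •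
        ((∑ k : Fin (n+3), j (X k) * EMap j nab (n+2) (X ∘ k.succAbove)) -
          ∑ k : Fin (n+3), ∑ m : Fin (n+2), EMap j nab (n+2)
            (Function.update (X ∘ k.succAbove) m (nab (X k) (X (k.succAbove m))))) := rfl
    set W0 := wrd j (List.ofFn X) with hW0
    set S3 := ∑ k : Fin (n+3), ∑ jj ∈ Finset.univ.filter (fun t : Fin (n+3) => t < k),
        wrd j (((List.ofFn X).eraseIdx (k : ℕ)).eraseIdx (jj : ℕ)) * j (nab (X jj) (X k)) with hS3
    set S3' := ∑ k : Fin (n+3), ∑ jj ∈ Finset.univ.filter (fun t : Fin (n+3) => t < k),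
        wrd j (((List.ofFn X).eraseIdx (k : ℕ)).eraseIdx (jj : ℕ)) * j (nab (X k) (X jj)) with hS3'
    -- per-k congruence for the A-part
    have hAk : ∀ k : Fin (n+3),
        (j (X k) * EMap j nab (n+2) (X ∘ k.succAbove)) -
          (W0 + (∑ i ∈ Finset.univ.filter (fun t : Fin (n+3) => t < k),
              wrd j (((List.ofFn X).eraseIdx (k:ℕ)).eraseIdx (i:ℕ)) * j ⁅X k, X i⁆)
            - ∑ kk : Fin (n+2), ∑ jj ∈ Finset.univ.filter (fun t : Fin (n+2) => t < kk),
                Hf j nab X (k.succAbove jj) (k.succAbove kk))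
        ∈ Ufil ι j (n+1) := by
      intro k
      have hIH := ih (X ∘ k.succAbove)
      have h1 := jmul_left ι j ρ hcomm (X k) hIH
      rw [mul_sub, mul_sub] at h1
      have h2 := moveA1 ι j ρ hcomm hbr (n+2) X k
      have h3 : (j (X k) * ∑ kk : Fin (n+2), ∑ jj ∈ Finset.univ.filter (fun t : Fin (n+2) => t < kk),
            wrd j (((List.ofFn (X ∘ k.succAbove)).eraseIdx (kk:ℕ)).eraseIdx (jj:ℕ))
              * j (nab ((X ∘ k.succAbove) jj) ((X ∘ k.succAbove) kk)))
          - (∑ kk : Fin (n+2), ∑ jj ∈ Finset.univ.filter (fun t : Fin (n+2) => t < kk),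
              Hf j nab X (k.succAbove jj) (k.succAbove kk)) ∈ Ufil ι j (n+1) := by
        rw [Finset.mul_sum, ← Finset.sum_sub_distrib]
        apply Submodule.sum_mem
        intro kk _
        rw [Finset.mul_sum, ← Finset.sum_sub_distrib]
        apply Submodule.sum_mem
        intro jj hjj
        have hjk : jj < kk := by
          simpa using (Finset.mem_filter.mp hjj).2
        exact consWord_mem ι j ρ hcomm hbr X k kk jj hjk
          (nab (X (k.succAbove jj)) (X (k.succAbove kk)))
      have hsum := Submodule.add_mem _ (Submodule.add_mem _ h1 h2) (Submodule.neg_mem _ h3)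
      convert hsum using 1
      abel
    -- per-(k,m) congruence for the B-part
    have hBk : ∀ (k : Fin (n+3)) (m : Fin (n+2)),
        EMap j nab (n+2) (Function.update (X ∘ k.succAbove) m (nab (X k) (X (k.succAbove m))))
          - GmD j nab X k (k.succAbove m) ∈ Ufil ι j (n+1) := by
      intro k m
      have hIH := Fmono ι j (Nat.le_succ n) (ih (Function.update (X ∘ k.succAbove) m
        (nab (X k) (X (k.succAbove m)))))
      have hS2 : (∑ kk : Fin (n+2), ∑ jj ∈ Finset.univ.filter (fun t : Fin (n+2) => t < kk),
          wrd j (((List.ofFn (Function.update (X ∘ k.succAbove) m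
              (nab (X k) (X (k.succAbove m))))).eraseIdx (kk:ℕ)).eraseIdx (jj:ℕ))
            * j (nab (Function.update (X ∘ k.succAbove) m (nab (X k) (X (k.succAbove m))) jj)
                (Function.update (X ∘ k.succAbove) m (nab (X k) (X (k.succAbove m))) kk)))
          ∈ Ufil ι j (n+1) := by
        apply Submodule.sum_mem
        intro kk _
        apply Submodule.sum_mem
        intro jj hjj
        have hjk : jj < kk := by
          simpa using (Finset.mem_filter.mp hjj).2
        apply jmul_right ι j
        apply wrd_mem ι j
        have hlen1 : ((List.ofFn (Function.update (X ∘ k.succAbove) m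
            (nab (X k) (X (k.succAbove m))))).eraseIdx (kk:ℕ)).length = n+1 := by
          simp [List.length_eraseIdx, kk.isLt]
        have hjlt : (jj:ℕ) < n+1 := by
          have h1 := Fin.lt_def.mp hjk
          have h2 := kk.isLt
          omega
        rw [List.length_eraseIdx, hlen1, if_pos hjlt]
        omega
      have hupd := updWord_mem ι j ρ hcomm hbr X k m (nab (X k) (X (k.succAbove m)))
      have hcomb := Submodule.add_mem _ (Submodule.add_mem _ hIH hupd)
        (Submodule.neg_mem _ hS2)
      have e : EMap j nab (n+2) (Function.update (X ∘ k.succAbove) m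
            (nab (X k) (X (k.succAbove m)))) - GmD j nab X k (k.succAbove m)
          = (EMap j nab (n+2) (Function.update (X ∘ k.succAbove) m
              (nab (X k) (X (k.succAbove m))))
            - (wrd j (List.ofFn (Function.update (X ∘ k.succAbove) m
                (nab (X k) (X (k.succAbove m)))))
              - (∑ kk : Fin (n+2), ∑ jj ∈ Finset.univ.filter (fun t : Fin (n+2) => t < kk),
          wrd j (((List.ofFn (Function.update (X ∘ k.succAbove) m
              (nab (X k) (X (k.succAbove m))))).eraseIdx (kk:ℕ)).eraseIdx (jj:ℕ))
            * j (nab (Function.update (X ∘ k.succAbove) m (nab (X k) (X (k.succAbove m))) jj)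
                (Function.update (X ∘ k.succAbove) m (nab (X k) (X (k.succAbove m))) kk)))))
            + (wrd j (List.ofFn (Function.update (X ∘ k.succAbove) m
                (nab (X k) (X (k.succAbove m)))))
              - wrd j (((List.ofFn X).eraseIdx
                    (max (k:ℕ) ((k.succAbove m : Fin (n+3)):ℕ))).eraseIdx
                    (min (k:ℕ) ((k.succAbove m : Fin (n+3)):ℕ)))
                  * j (nab (X k) (X (k.succAbove m))))
            + -(∑ kk : Fin (n+2), ∑ jj ∈ Finset.univ.filter (fun t : Fin (n+2) => t < kk),
          wrd j (((List.ofFn (Function.update (X ∘ k.succAbove) m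
              (nab (X k) (X (k.succAbove m))))).eraseIdx (kk:ℕ)).eraseIdx (jj:ℕ))
            * j (nab (Function.update (X ∘ k.succAbove) m (nab (X k) (X (k.succAbove m))) jj)
                (Function.update (X ∘ k.succAbove) m (nab (X k) (X (k.succAbove m))) kk))) := by
        simp only [GmD]
        abel
      rw [e]
      exact hcomb
    -- summed congruences
    have hA : (∑ k : Fin (n+3), j (X k) * EMap j nab (n+2) (X ∘ k.succAbove)) -
        (∑ k : Fin (n+3), (W0 + (∑ i ∈ Finset.univ.filter (fun t : Fin (n+3) => t < k),
            wrd j (((List.ofFn X).eraseIdx (k:ℕ)).eraseIdx (i:ℕ)) * j ⁅X k, X i⁆)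
          - ∑ kk : Fin (n+2), ∑ jj ∈ Finset.univ.filter (fun t : Fin (n+2) => t < kk),
              Hf j nab X (k.succAbove jj) (k.succAbove kk)))
        ∈ Ufil ι j (n+1) := by
      rw [← Finset.sum_sub_distrib]
      exact Submodule.sum_mem _ (fun k _ => hAk k)
    have hB : (∑ k : Fin (n+3), ∑ m : Fin (n+2), EMap j nab (n+2)
          (Function.update (X ∘ k.succAbove) m (nab (X k) (X (k.succAbove m))))) -
        (∑ k : Fin (n+3), ∑ m : Fin (n+2), GmD j nab X k (k.succAbove m))
        ∈ Ufil ι j (n+1) := by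
      rw [← Finset.sum_sub_distrib]
      apply Submodule.sum_mem
      intro k _
      rw [← Finset.sum_sub_distrib]
      exact Submodule.sum_mem _ (fun m _ => hBk k m)
    -- the exact combinatorial identity
    have hBr : (∑ k : Fin (n+3), ∑ i ∈ Finset.univ.filter (fun t : Fin (n+3) => t < k),
        wrd j (((List.ofFn X).eraseIdx (k:ℕ)).eraseIdx (i:ℕ)) * j ⁅X k, X i⁆)
        = S3' - S3 := by
      rw [hS3, hS3', ← Finset.sum_sub_distrib]
      apply Finset.sum_congr rfl
      intro k _
      rw [← Finset.sum_sub_distrib]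
      apply Finset.sum_congr rfl
      intro i _
      rw [← mul_sub]
      congr 1
      rw [← j_sub j hj_add, ← htf (X k) (X i)]
    have hD : (∑ k : Fin (n+3), ∑ kk : Fin (n+2),
          ∑ jj ∈ Finset.univ.filter (fun t : Fin (n+2) => t < kk),
            Hf j nab X (k.succAbove jj) (k.succAbove kk))
        = (n+1) • S3 := by
      rw [reindex1 (Hf j nab X), hS3]
      simp only [Hf]
    have hGmsum : (∑ k : Fin (n+3), ∑ m : Fin (n+2), GmD j nab X k (k.succAbove m))
        = S3' + S3 := by
      have h1 : ∀ k : Fin (n+3), (∑ m : Fin (n+2), GmD j nab X k (k.succAbove m))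
          = ∑ i : Fin (n+3), if i ≠ k then GmD j nab X k i else 0 :=
        fun k => sum_succAbove_ite (GmD j nab X k) k
      rw [Finset.sum_congr rfl (fun k _ => h1 k), split_ne (GmD j nab X)]
      congr 1
      · rw [hS3']
        apply Finset.sum_congr rfl
        intro k _
        apply Finset.sum_congr rfl
        intro i hi
        have hik : i < k := by simpa using (Finset.mem_filter.mp hi).2
        rw [GmD_lt j nab X hik]
      · rw [hS3]
        apply Finset.sum_congr rfl
        intro q _
        apply Finset.sum_congr rfl
        intro p hp
        have hpq : p < q := by simpa using (Finset.mem_filter.mp hp).2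
        rw [GmD_gt j nab X hpq, Hf]
    have hID : (∑ k : Fin (n+3), (W0 + (∑ i ∈ Finset.univ.filter (fun t : Fin (n+3) => t < k),
            wrd j (((List.ofFn X).eraseIdx (k:ℕ)).eraseIdx (i:ℕ)) * j ⁅X k, X i⁆)
          - ∑ kk : Fin (n+2), ∑ jj ∈ Finset.univ.filter (fun t : Fin (n+2) => t < kk),
              Hf j nab X (k.succAbove jj) (k.succAbove kk)))
        - (∑ k : Fin (n+3), ∑ m : Fin (n+2), GmD j nab X k (k.succAbove m))
        = (((n+2:ℕ) : ℚ) + 1) • (W0 - S3) := by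
      rw [Finset.sum_sub_distrib, Finset.sum_add_distrib, hBr, hD, hGmsum]
      rw [Finset.sum_const, Finset.card_univ, Fintype.card_fin]
      have hsc : ∀ u : U, (((n+2:ℕ) : ℚ) + 1) • u = (n+3) • u := by
        intro u
        rw [← Nat.cast_smul_eq_nsmul ℚ (n+3) u]
        congr 1
        push_cast
        ring
      have hsplit : ∀ u : U, (n+3) • u = (n+1) • u + 2 • u := by
        intro u
        have hn : n+3 = (n+1)+2 := by omega
        rw [hn, add_nsmul]
      simp only [smul_sub, hsc, hsplit]
      generalize (n+1) • W0 = gW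
      generalize (n+1) • S3 = gS
      abel
    -- put everything together
    have hkey : ((∑ k : Fin (n+3), j (X k) * EMap j nab (n+2) (X ∘ k.succAbove)) -
          ∑ k : Fin (n+3), ∑ m : Fin (n+2), EMap j nab (n+2)
            (Function.update (X ∘ k.succAbove) m (nab (X k) (X (k.succAbove m)))))
        - (((n+2:ℕ) : ℚ) + 1) • (W0 - S3) ∈ Ufil ι j (n+1) := by
      have := Submodule.sub_mem _ hA hB
      rw [← hID]
      convert this using 1
      abel
    have hc : (((n+2:ℕ) : ℚ) + 1) ≠ 0 := by positivity
    have hfin := Submodule.smul_mem (Ufil ι j (n+1)) (((n+2:ℕ) : ℚ) + 1)⁻¹ hkey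
    rw [smul_sub, smul_smul, inv_mul_cancel₀ hc, one_smul] at hfin
    rw [hE]
    exact hfin

end MainProof

end PbwAux

open PbwAux in
/-- Highest order terms of the formal exponential map.  With `n + 2` factors
`X_0,…,X_{n+1}` (so at least two), the congruence holds modulo `U^{≤ n}(L)`,
which is `U^{≤ (number of factors) − 2}(L)`, matching the paper's
`pbw(X_0⊙⋯⊙X_n) ≡ X_0⋯X_n − Σ_{j<k} ⋯ mod U^{≤ n−1}` for `n ≥ 1`. -/
theorem pbw_highest_order_terms
    {A L U : Type*} [CommRing A] [Algebra ℚ A]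
    [LieRing L] [Module A L] [Ring U] [Algebra ℚ U]
    (ι : A →+* U) (j : L → U) (ρ : L → A → A) (nab : L → L → L)
    (hj_add : ∀ X Y : L, j (X + Y) = j X + j Y)
    (hj_smul : ∀ (a : A) (X : L), j (a • X) = ι a * j X)
    (hρ_der : ∀ (X : L) (a b : A), ρ X (a * b) = a * ρ X b + b * ρ X a)
    (hcomm : ∀ (X : L) (a : A), j X * ι a = ι a * j X + ι (ρ X a))
    (hbr : ∀ X Y : L, j X * j Y - j Y * j X = j ⁅X, Y⁆)
    (hnab_smul₁ : ∀ (a : A) (X Y : L), nab (a • X) Y = a • nab X Y)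
    (hnab_smul₂ : ∀ (a : A) (X Y : L), nab X (a • Y) = ρ X a • Y + a • nab X Y)
    -- the connection `∇` is torsion-free
    (htf : ∀ X Y : L, nab X Y - nab Y X = ⁅X, Y⁆)
    (n : ℕ) (X : Fin (n + 2) → L) :
    EMap j nab (n + 2) X -
        ((List.ofFn fun i => j (X i)).prod -
          ∑ k : Fin (n + 2), ∑ jj ∈ Finset.univ.filter (fun t : Fin (n + 2) => t < k),
            (((List.ofFn fun i => j (X i)).eraseIdx (k : ℕ)).eraseIdx (jj : ℕ)).prod *
              j (nab (X jj) (X k)))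
      ∈ Ufil ι j n := by
  have hmain := mainAux (ι := ι) (j := j) (ρ := ρ) (nab := nab) (hj_add := hj_add)
    (hcomm := hcomm) (hbr := hbr) (htf := htf) n X
  have hconv : ∀ (a b : ℕ), (((List.ofFn fun i => j (X i)).eraseIdx a).eraseIdx b).prod
      = wrd j (((List.ofFn X).eraseIdx a).eraseIdx b) := by
    intro a b
    rw [wrd, show (List.ofFn fun i => j (X i)) = (List.ofFn X).map j from by
        rw [List.map_ofFn]; rfl,
      eraseIdx_map', eraseIdx_map']
  rw [← wrd_ofFn j X]
  simp only [hconv]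
  exact hmain

end
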